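/- arXiv:1305.1265 — 5 statements merged into one kernel-verified Lean document; each statement's English description precedes it below -/
import Mathlib

section
/- Let d ≥ 3 be an integer, set g = 2(d−1) and k = d−1, and let c > 0 be a rational number. Define rational numbers f_0 = d(d−1), f_1 = (2d−3)(3d−2), f_2 = 3(d−2)(4d−3), and for every integer i with 3 ≤ i ≤ d−1 set f_i = −i(i−2)·f_1 + (i(i−1)/2)·f_2 + γ_i/c. Define b_0 = g and b_i = 4i(g−i) for 1 ≤ i ≤ d−1. Then for every integer i with 0 ≤ i ≤ d−1 one has (6d² + d − 6)·b_i < (8g + 4)·f_i. -/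
open Finset

/-- The coefficient `γ_i` (for `k ≥ 2`, `i ≥ 3`) from the Eisenbud–Harris
formula for the Petri divisor. -/
def gammaEH (k i : ℕ) : ℚ :=
  ((i : ℚ) - 1) * ((i : ℚ) - 2) * (Nat.factorial (2 * k - 2)) /
      ((Nat.factorial k) * (Nat.factorial (k - 1)))
    - ∑ l ∈ Finset.Icc 1 ((i - 2) / 2),
        2 * ((i : ℚ) - 1 - 2 * (l : ℚ)) * (Nat.factorial (2 * l)) *
            (Nat.factorial (2 * k - 2 - 2 * l)) /
          ((Nat.factorial (l + 1)) * (Nat.factorial l) * (Nat.factorial (k - l)) *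
            (Nat.factorial (k - l + 1)))

lemma vand_sq (l m : ℕ) :
    (l + m).choose l * (l + m).choose l ≤ (2 * l + 2 * m).choose (2 * l) := by
  have h : 2 * l + 2 * m = (l + m) + (l + m) := by ring
  have hv := Nat.add_choose_eq (l + m) (l + m) (2 * l)
  rw [h, hv]
  have hmem : ((l, l) : ℕ × ℕ) ∈ Finset.HasAntidiagonal.antidiagonal (2 * l) := by
    simp [Finset.HasAntidiagonal.mem_antidiagonal, two_mul]
  exact Finset.single_le_sum
    (f := fun ij : ℕ × ℕ => (l + m).choose ij.1 * (l + m).choose ij.2)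
    (fun x _ => Nat.zero_le _) hmem

lemma fact_ineq (l m : ℕ) :
    (2 * l).factorial * (2 * m).factorial * ((l + m + 1).factorial * (l + m).factorial)
      ≤ (2 * l + 2 * m).factorial *
        ((l + 1).factorial * l.factorial * (m + 1).factorial * (m + 2).factorial) := by
  set C := (l + m).choose l with hCdef
  set D := (2 * l + 2 * m).choose (2 * l) with hDdef
  have h1 : C * l.factorial * m.factorial = (l + m).factorial := by
    have := Nat.choose_mul_factorial_mul_factorial (Nat.le_add_right l m)
    simpa using this
  have h2 : D * (2 * l).factorial * (2 * m).factorial = (2 * l + 2 * m).factorial := by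
    have := Nat.choose_mul_factorial_mul_factorial (Nat.le_add_right (2 * l) (2 * m))
    simpa using this
  have h3 : C * C ≤ D := vand_sq l m
  have key : (l + m + 1) * (C * C) ≤ ((l + 1) * ((m + 1) * ((m + 1) * (m + 2)))) * D := by
    have h4 : l + m + 1 ≤ (l + 1) * ((m + 1) * ((m + 1) * (m + 2))) := by
      calc l + m + 1 ≤ (l + 1) * (m + 1) := by nlinarith [Nat.zero_le (l * m)]
        _ ≤ (l + 1) * ((m + 1) * ((m + 1) * (m + 2))) :=
            Nat.mul_le_mul_left _ (Nat.le_mul_of_pos_right _ (by positivity))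
    exact Nat.mul_le_mul h4 h3
  calc (2 * l).factorial * (2 * m).factorial * ((l + m + 1).factorial * (l + m).factorial)
      = ((l + m + 1) * (C * C)) *
          (l.factorial * l.factorial * (m.factorial * m.factorial) *
            ((2 * l).factorial * (2 * m).factorial)) := by
        rw [Nat.factorial_succ, ← h1]; ring
    _ ≤ ((l + 1) * ((m + 1) * ((m + 1) * (m + 2)))) * D *
          (l.factorial * l.factorial * (m.factorial * m.factorial) *
            ((2 * l).factorial * (2 * m).factorial)) := Nat.mul_le_mul_right _ key
    _ = (2 * l + 2 * m).factorial *
          ((l + 1).factorial * l.factorial * (m + 1).factorial * (m + 2).factorial) := by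
        rw [← h2]
        simp only [Nat.factorial_succ]
        ring

lemma gamma_nonneg (k i : ℕ) (hk : 2 ≤ k) (hi : 3 ≤ i) (hik : i ≤ k) :
    0 ≤ gammaEH k i := by
  unfold gammaEH
  rw [sub_nonneg]
  set A : ℚ := (Nat.factorial (2 * k - 2)) / ((Nat.factorial k) * (Nat.factorial (k - 1)))
    with hA
  have hA0 : 0 ≤ A := by positivity
  have hbound : ∀ l ∈ Finset.Icc 1 ((i - 2) / 2),
      2 * ((i : ℚ) - 1 - 2 * (l : ℚ)) * (Nat.factorial (2 * l)) *
            (Nat.factorial (2 * k - 2 - 2 * l)) /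
          ((Nat.factorial (l + 1)) * (Nat.factorial l) * (Nat.factorial (k - l)) *
            (Nat.factorial (k - l + 1)))
        ≤ 2 * ((i : ℚ) - 3) * A := by
    intro l hl
    rw [Finset.mem_Icc] at hl
    obtain ⟨hl1, hl2⟩ := hl
    have h2l : 2 * l ≤ i - 2 := by omega
    have hlk : l + 1 ≤ k := by omega
    -- T_l ≤ A
    set m : ℕ := k - 1 - l with hm
    have hkm : k = l + m + 1 := by omega
    have e1 : 2 * k - 2 = 2 * l + 2 * m := by omega
    have e2 : 2 * k - 2 - 2 * l = 2 * m := by omega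
    have e3 : k - l = m + 1 := by omega
    have e4 : k - l + 1 = m + 2 := by omega
    have e5 : k - 1 = l + m := by omega
    have hT : ((Nat.factorial (2 * l)) * (Nat.factorial (2 * k - 2 - 2 * l)) : ℚ) /
          ((Nat.factorial (l + 1)) * (Nat.factorial l) * (Nat.factorial (k - l)) *
            (Nat.factorial (k - l + 1))) ≤ A := by
      rw [hA, div_le_div_iff₀ (by positivity) (by positivity)]
      rw [e2, e4, e3, e5, e1, hkm]
      have hcast : ((2 * l).factorial * (2 * m).factorial *
            ((l + m + 1).factorial * (l + m).factorial) : ℚ)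
          ≤ ((2 * l + 2 * m).factorial *
            ((l + 1).factorial * l.factorial * (m + 1).factorial * (m + 2).factorial) : ℚ) := by
        exact_mod_cast fact_ineq l m
      calc ((2 * l).factorial : ℚ) * (Nat.factorial (2 * m)) *
            ((Nat.factorial (l + m + 1)) * (Nat.factorial (l + m)))
          = ((2 * l).factorial * (2 * m).factorial *
            ((l + m + 1).factorial * (l + m).factorial) : ℚ) := by push_cast; ring
        _ ≤ ((2 * l + 2 * m).factorial *
            ((l + 1).factorial * l.factorial * (m + 1).factorial * (m + 2).factorial) : ℚ) :=
            hcast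
        _ = ((2 * l + 2 * m).factorial : ℚ) *
            ((Nat.factorial (l + 1)) * (Nat.factorial l) * (Nat.factorial (m + 1)) *
              (Nat.factorial (m + 2))) := by push_cast; ring
    have hT0 : (0:ℚ) ≤ ((Nat.factorial (2 * l)) * (Nat.factorial (2 * k - 2 - 2 * l)) : ℚ) /
          ((Nat.factorial (l + 1)) * (Nat.factorial l) * (Nat.factorial (k - l)) *
            (Nat.factorial (k - l + 1))) := by positivity
    have hcoef0 : (0:ℚ) ≤ 2 * ((i : ℚ) - 1 - 2 * (l : ℚ)) := by
      have : (2 * l : ℚ) ≤ (i : ℚ) - 2 := by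
        have : ((2 * l : ℕ) : ℚ) ≤ ((i - 2 : ℕ) : ℚ) := by exact_mod_cast h2l
        push_cast [Nat.cast_sub (by omega : 2 ≤ i)] at this
        linarith
      linarith
    have hcoef : 2 * ((i : ℚ) - 1 - 2 * (l : ℚ)) ≤ 2 * ((i : ℚ) - 3) := by
      have : (1:ℚ) ≤ (l:ℚ) := by exact_mod_cast hl1
      linarith
    calc 2 * ((i : ℚ) - 1 - 2 * (l : ℚ)) * (Nat.factorial (2 * l)) *
            (Nat.factorial (2 * k - 2 - 2 * l)) /
          ((Nat.factorial (l + 1)) * (Nat.factorial l) * (Nat.factorial (k - l)) *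
            (Nat.factorial (k - l + 1)))
        = (2 * ((i : ℚ) - 1 - 2 * (l : ℚ))) *
            (((Nat.factorial (2 * l)) * (Nat.factorial (2 * k - 2 - 2 * l)) : ℚ) /
          ((Nat.factorial (l + 1)) * (Nat.factorial l) * (Nat.factorial (k - l)) *
            (Nat.factorial (k - l + 1)))) := by ring
      _ ≤ (2 * ((i : ℚ) - 3)) * A := by
          apply mul_le_mul hcoef hT hT0 (by linarith [hcoef0, hcoef])
  have hsum := Finset.sum_le_card_nsmul _ _ _ hbound
  have hcard : (Finset.Icc 1 ((i - 2) / 2)).card = (i - 2) / 2 := by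
    rw [Nat.card_Icc]; omega
  rw [hcard] at hsum
  have hm2 : (((i - 2) / 2 : ℕ) : ℚ) * 2 ≤ (i : ℚ) - 2 := by
    have h := Nat.div_mul_le_self (i - 2) 2
    have : (((i - 2) / 2 * 2 : ℕ) : ℚ) ≤ ((i - 2 : ℕ) : ℚ) := by exact_mod_cast h
    push_cast [Nat.cast_sub (by omega : 2 ≤ i)] at this
    linarith
  have hi3 : (3:ℚ) ≤ (i:ℚ) := by exact_mod_cast hi
  calc ∑ l ∈ Finset.Icc 1 ((i - 2) / 2),
        2 * ((i : ℚ) - 1 - 2 * (l : ℚ)) * (Nat.factorial (2 * l)) *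
            (Nat.factorial (2 * k - 2 - 2 * l)) /
          ((Nat.factorial (l + 1)) * (Nat.factorial l) * (Nat.factorial (k - l)) *
            (Nat.factorial (k - l + 1)))
      ≤ ((i - 2) / 2 : ℕ) • (2 * ((i : ℚ) - 3) * A) := hsum
    _ = (((i - 2) / 2 : ℕ) : ℚ) * (2 * ((i : ℚ) - 3) * A) := by
        rw [nsmul_eq_mul]
    _ ≤ ((i : ℚ) - 1) * ((i : ℚ) - 2) * A := by
        nlinarith [hm2, hA0, hi3, mul_le_mul_of_nonneg_right
          (mul_le_mul_of_nonneg_right hm2 (by linarith : (0:ℚ) ≤ (i:ℚ) - 3)) hA0]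
    _ = ((i : ℚ) - 1) * ((i : ℚ) - 2) * (Nat.factorial (2 * k - 2)) /
          ((Nat.factorial k) * (Nat.factorial (k - 1))) := by rw [hA]; ring

theorem stmt_1 (d : ℕ) (hd : 3 ≤ d) (c : ℚ) (hc : 0 < c)
    (g : ℚ) (hg : g = 2 * ((d : ℚ) - 1)) (k : ℕ) (hk : k = d - 1)
    (f : ℕ → ℚ)
    (hf0 : f 0 = (d : ℚ) * ((d : ℚ) - 1))
    (hf1 : f 1 = (2 * (d : ℚ) - 3) * (3 * (d : ℚ) - 2))
    (hf2 : f 2 = 3 * ((d : ℚ) - 2) * (4 * (d : ℚ) - 3))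
    (hfi : ∀ i : ℕ, 3 ≤ i → i ≤ d - 1 →
      f i = -(i : ℚ) * ((i : ℚ) - 2) * f 1 + ((i : ℚ) * ((i : ℚ) - 1) / 2) * f 2
              + gammaEH k i / c)
    (b : ℕ → ℚ) (hb0 : b 0 = g)
    (hbi : ∀ i : ℕ, 1 ≤ i → i ≤ d - 1 → b i = 4 * (i : ℚ) * (g - (i : ℚ))) :
    ∀ i : ℕ, i ≤ d - 1 → (6 * (d : ℚ) ^ 2 + (d : ℚ) - 6) * b i < (8 * g + 4) * f i := by
  intro i hi
  have hd3 : (3:ℚ) ≤ (d:ℚ) := by exact_mod_cast hd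
  rcases Nat.lt_or_ge i 3 with h3 | h3
  · interval_cases i
    · rw [hb0, hf0, hg]
      nlinarith [mul_pos (mul_pos (by linarith : (0:ℚ) < (d:ℚ) - 1)
        (by linarith : (0:ℚ) < (d:ℚ) - 2)) (by linarith : (0:ℚ) < 2 * (d:ℚ) - 3)]
    · rw [hbi 1 le_rfl hi, hf1, hg]; push_cast
      nlinarith [mul_pos (mul_pos (by linarith : (0:ℚ) < (d:ℚ) - 1)
        (by linarith : (0:ℚ) < (d:ℚ) - 2)) (by linarith : (0:ℚ) < 2 * (d:ℚ) - 3)]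
    · rw [hbi 2 (by norm_num) hi, hf2, hg]; push_cast
      nlinarith [mul_nonneg (by linarith : (0:ℚ) ≤ (d:ℚ) - 2) (sq_nonneg ((d:ℚ) - 3)),
        sq_nonneg ((d:ℚ) - 3), hd3]
  · have hik : i ≤ k := by omega
    have hγ : 0 ≤ gammaEH k i := gamma_nonneg k i (by omega) h3 hik
    rw [hbi i (by omega) hi, hfi i h3 hi, hf1, hf2, hg]
    have hiq : ((i:ℚ)) + 1 ≤ (d:ℚ) := by
      have : i + 1 ≤ d := by omega
      exact_mod_cast this
    have hi3 : (3:ℚ) ≤ (i:ℚ) := by exact_mod_cast h3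
    have hγc : 0 ≤ gammaEH k i / c := div_nonneg hγ hc.le
    nlinarith [mul_nonneg (mul_nonneg (by linarith : (0:ℚ) ≤ (i:ℚ) - 3)
        (by linarith : (0:ℚ) ≤ (d:ℚ) - 1 - (i:ℚ))) (by linarith : (0:ℚ) ≤ (d:ℚ) - 3),
      mul_nonneg (by linarith : (0:ℚ) ≤ (i:ℚ) - 3) (by linarith : (0:ℚ) ≤ (d:ℚ) - 1 - (i:ℚ)),
      mul_nonneg (by linarith : (0:ℚ) ≤ (i:ℚ) - 3) (by linarith : (0:ℚ) ≤ (d:ℚ) - 3),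
      mul_nonneg (by linarith : (0:ℚ) ≤ (d:ℚ) - 1 - (i:ℚ)) (by linarith : (0:ℚ) ≤ (d:ℚ) - 3),
      sq_nonneg ((i:ℚ) - 3), sq_nonneg ((d:ℚ) - 1 - (i:ℚ)), hγc,
      mul_nonneg (by linarith : (0:ℚ) ≤ 16*(d:ℚ) - 12) hγc]
end

section
/- Let k ≥ 3 be an integer and let i be an integer with 3 ≤ i ≤ k. Then γ_i ≥ 0, where γ_i = (i−1)(i−2)·(2k−2)!/(k!·(k−1)!) − Σ_{l=1}^{⌊(i−2)/2⌋} 2(i−1−2l)·(2l)!·(2k−2−2l)!/((l+1)!·l!·(k−l)!·(k−l+1)!) is a rational number. -/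
open Finset

lemma vander_sq (l m : ℕ) :
    (l + m).choose l * (l + m).choose l ≤ (2 * (l + m)).choose (2 * l) := by
  have h : (2 * (l + m)).choose (2 * l)
      = ∑ ij ∈ Finset.HasAntidiagonal.antidiagonal (2 * l),
          (l + m).choose ij.1 * (l + m).choose ij.2 := by
    rw [two_mul (l + m)]
    exact Nat.add_choose_eq (l + m) (l + m) (2 * l)
  rw [h]
  have hmem : ((l, l) : ℕ × ℕ) ∈ Finset.HasAntidiagonal.antidiagonal (2 * l) := by
    simp [Finset.mem_antidiagonal, two_mul]
  exact Finset.single_le_sum (f := fun ij : ℕ × ℕ =>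
    (l + m).choose ij.1 * (l + m).choose ij.2) (fun _ _ => Nat.zero_le _) hmem

lemma key_nat (l m : ℕ) (hl : 1 ≤ l) (hm : l + 1 ≤ m) :
    Nat.factorial (2 * l) * Nat.factorial (2 * m) *
        (Nat.factorial (l + m + 1) * Nat.factorial (l + m)) ≤
      Nat.factorial (2 * (l + m)) *
        (Nat.factorial (l + 1) * Nat.factorial l *
          (Nat.factorial (m + 1) * Nat.factorial (m + 2))) := by
  set C := (l + m).choose l with hCdef
  set D := (2 * (l + m)).choose (2 * l) with hDdef
  have hC : C * Nat.factorial l * Nat.factorial m = Nat.factorial (l + m) := by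
    have := Nat.choose_mul_factorial_mul_factorial (Nat.le_add_right l m)
    simpa [Nat.add_sub_cancel_left] using this
  have hD : D * Nat.factorial (2 * l) * Nat.factorial (2 * m)
      = Nat.factorial (2 * (l + m)) := by
    have hle : 2 * l ≤ 2 * (l + m) := by omega
    have := Nat.choose_mul_factorial_mul_factorial hle
    have h2 : 2 * (l + m) - 2 * l = 2 * m := by omega
    rw [h2] at this
    exact this
  have hV : C * C ≤ D := vander_sq l m
  -- scalar inequality
  have hscal : (l + m + 1) *
      (Nat.factorial l * Nat.factorial l * (Nat.factorial m * Nat.factorial m)) ≤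
      Nat.factorial (l + 1) * Nat.factorial l *
        (Nat.factorial (m + 1) * Nat.factorial (m + 2)) := by
    have e1 : Nat.factorial (l + 1) = (l + 1) * Nat.factorial l := Nat.factorial_succ l
    have e2 : Nat.factorial (m + 1) = (m + 1) * Nat.factorial m := Nat.factorial_succ m
    have e3 : Nat.factorial (m + 2) = (m + 2) * ((m + 1) * Nat.factorial m) := by
      rw [Nat.factorial_succ, Nat.factorial_succ]
    rw [e1, e2, e3]
    have hco : l + m + 1 ≤ (l + 1) * ((m + 1) * ((m + 2) * (m + 1))) := by
      calc l + m + 1 ≤ (l + 1) * ((m + 1) * 1) := by nlinarith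
        _ ≤ (l + 1) * ((m + 1) * ((m + 2) * (m + 1))) :=
          Nat.mul_le_mul_left _ (Nat.mul_le_mul_left _ (by nlinarith))
    calc (l + m + 1) *
          (Nat.factorial l * Nat.factorial l * (Nat.factorial m * Nat.factorial m))
        ≤ (l + 1) * ((m + 1) * ((m + 2) * (m + 1))) *
          (Nat.factorial l * Nat.factorial l * (Nat.factorial m * Nat.factorial m)) :=
          Nat.mul_le_mul_right _ hco
      _ = (l + 1) * Nat.factorial l * Nat.factorial l *
          ((m + 1) * Nat.factorial m * ((m + 2) * ((m + 1) * Nat.factorial m))) := by ring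
  calc Nat.factorial (2 * l) * Nat.factorial (2 * m) *
        (Nat.factorial (l + m + 1) * Nat.factorial (l + m))
      = (C * C) * (Nat.factorial (2 * l) * Nat.factorial (2 * m)) *
        ((l + m + 1) *
          (Nat.factorial l * Nat.factorial l * (Nat.factorial m * Nat.factorial m))) := by
        rw [Nat.factorial_succ (l + m), ← hC]; ring
    _ ≤ (C * C) * (Nat.factorial (2 * l) * Nat.factorial (2 * m)) *
        (Nat.factorial (l + 1) * Nat.factorial l *
          (Nat.factorial (m + 1) * Nat.factorial (m + 2))) :=
        Nat.mul_le_mul_left _ hscal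
    _ ≤ D * (Nat.factorial (2 * l) * Nat.factorial (2 * m)) *
        (Nat.factorial (l + 1) * Nat.factorial l *
          (Nat.factorial (m + 1) * Nat.factorial (m + 2))) := by
        exact Nat.mul_le_mul_right _ (Nat.mul_le_mul_right _ hV)
    _ = Nat.factorial (2 * (l + m)) *
        (Nat.factorial (l + 1) * Nat.factorial l *
          (Nat.factorial (m + 1) * Nat.factorial (m + 2))) := by
        rw [← hD]; ring

lemma T_le_C (k l : ℕ) (hl : 1 ≤ l) (h2l : 2 * l + 2 ≤ k) :
    ((Nat.factorial (2 * l)) : ℚ) * (Nat.factorial (2 * k - 2 - 2 * l)) /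
        ((Nat.factorial (l + 1)) * (Nat.factorial l) * (Nat.factorial (k - l)) *
          (Nat.factorial (k - l + 1))) ≤
      ((Nat.factorial (2 * k - 2)) : ℚ) / ((Nat.factorial k) * (Nat.factorial (k - 1))) := by
  set m := k - 1 - l with hmdef
  have e1 : 2 * k - 2 - 2 * l = 2 * m := by omega
  have e2 : k - l = m + 1 := by omega
  have e3 : k - l + 1 = m + 2 := by omega
  have e4 : 2 * k - 2 = 2 * (l + m) := by omega
  have e5 : k = l + m + 1 := by omega
  have e6 : k - 1 = l + m := by omega
  rw [e1, e3, e2, e4]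
  rw [show (Nat.factorial k : ℚ) = (Nat.factorial (l + m + 1) : ℚ) by rw [← e5],
    show (Nat.factorial (k - 1) : ℚ) = (Nat.factorial (l + m) : ℚ) by rw [e6]]
  rw [div_le_div_iff₀ (by positivity) (by positivity)]
  have H := key_nat l m hl (by omega)
  calc ((Nat.factorial (2 * l)) : ℚ) * (Nat.factorial (2 * m)) *
        ((Nat.factorial (l + m + 1)) * (Nat.factorial (l + m)))
      = ((Nat.factorial (2 * l) * Nat.factorial (2 * m) *
          (Nat.factorial (l + m + 1) * Nat.factorial (l + m)) : ℕ) : ℚ) := by push_cast; ring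
    _ ≤ ((Nat.factorial (2 * (l + m)) *
          (Nat.factorial (l + 1) * Nat.factorial l *
            (Nat.factorial (m + 1) * Nat.factorial (m + 2))) : ℕ) : ℚ) := by exact_mod_cast H
    _ = ((Nat.factorial (2 * (l + m))) : ℚ) *
        ((Nat.factorial (l + 1)) * (Nat.factorial l) * (Nat.factorial (m + 1)) *
          (Nat.factorial (m + 2))) := by push_cast; ring

theorem stmt_5 (k : ℕ) (hk : 3 ≤ k) (i : ℕ) (h3 : 3 ≤ i) (hi : i ≤ k) :
    0 ≤ gammaEH k i := by
  unfold gammaEH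
  rw [sub_nonneg]
  set C : ℚ := ((Nat.factorial (2 * k - 2)) : ℚ) /
    ((Nat.factorial k) * (Nat.factorial (k - 1))) with hCdef
  have hC0 : 0 ≤ C := by positivity
  have hterm : ∀ l ∈ Finset.Icc 1 ((i - 2) / 2),
      2 * ((i : ℚ) - 1 - 2 * (l : ℚ)) * (Nat.factorial (2 * l)) *
          (Nat.factorial (2 * k - 2 - 2 * l)) /
        ((Nat.factorial (l + 1)) * (Nat.factorial l) * (Nat.factorial (k - l)) *
          (Nat.factorial (k - l + 1))) ≤ 2 * ((i : ℚ) - 3) * C := by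
    intro l hlmem
    rw [Finset.mem_Icc] at hlmem
    obtain ⟨hl1, hl2⟩ := hlmem
    have h2l : 2 * l ≤ i - 2 := by omega
    have h2lk : 2 * l + 2 ≤ k := by omega
    have hcast : (2 * l : ℚ) ≤ (i : ℚ) - 2 := by
      have : ((2 * l : ℕ) : ℚ) ≤ ((i - 2 : ℕ) : ℚ) := by exact_mod_cast h2l
      push_cast at this
      rw [Nat.cast_sub (by omega)] at this
      push_cast at this
      linarith
    have hco1 : (0 : ℚ) ≤ (i : ℚ) - 1 - 2 * (l : ℚ) := by push_cast at hcast ⊢; linarith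
    have hco2 : (i : ℚ) - 1 - 2 * (l : ℚ) ≤ (i : ℚ) - 3 := by
      have : (1 : ℚ) ≤ (l : ℚ) := by exact_mod_cast hl1
      linarith
    have hT := T_le_C k l hl1 h2lk
    have hT0 : (0 : ℚ) ≤ ((Nat.factorial (2 * l)) : ℚ) * (Nat.factorial (2 * k - 2 - 2 * l)) /
        ((Nat.factorial (l + 1)) * (Nat.factorial l) * (Nat.factorial (k - l)) *
          (Nat.factorial (k - l + 1))) := by positivity
    have hrw : 2 * ((i : ℚ) - 1 - 2 * (l : ℚ)) * (Nat.factorial (2 * l)) *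
          (Nat.factorial (2 * k - 2 - 2 * l)) /
        ((Nat.factorial (l + 1)) * (Nat.factorial l) * (Nat.factorial (k - l)) *
          (Nat.factorial (k - l + 1)))
        = (2 * ((i : ℚ) - 1 - 2 * (l : ℚ))) *
          (((Nat.factorial (2 * l)) : ℚ) * (Nat.factorial (2 * k - 2 - 2 * l)) /
        ((Nat.factorial (l + 1)) * (Nat.factorial l) * (Nat.factorial (k - l)) *
          (Nat.factorial (k - l + 1)))) := by ring
    rw [hrw]
    calc (2 * ((i : ℚ) - 1 - 2 * (l : ℚ))) *
          (((Nat.factorial (2 * l)) : ℚ) * (Nat.factorial (2 * k - 2 - 2 * l)) /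
            ((Nat.factorial (l + 1)) * (Nat.factorial l) * (Nat.factorial (k - l)) *
              (Nat.factorial (k - l + 1))))
        ≤ (2 * ((i : ℚ) - 3)) * C := by
          apply mul_le_mul (by linarith) hT hT0 (by linarith)
      _ = 2 * ((i : ℚ) - 3) * C := by ring
  have hsum := Finset.sum_le_card_nsmul (Finset.Icc 1 ((i - 2) / 2)) _ _ hterm
  rw [Nat.card_Icc] at hsum
  simp only [nsmul_eq_mul] at hsum
  have hcard : (i - 2) / 2 + 1 - 1 = (i - 2) / 2 := by omega
  rw [hcard] at hsum
  refine le_trans hsum ?_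
  have hm2 : 2 * ((i - 2) / 2) ≤ i - 2 := by omega
  have hmcast : 2 * (((i - 2) / 2 : ℕ) : ℚ) ≤ (i : ℚ) - 2 := by
    have : ((2 * ((i - 2) / 2) : ℕ) : ℚ) ≤ ((i - 2 : ℕ) : ℚ) := by
      exact_mod_cast (by omega : 2 * ((i - 2) / 2) ≤ i - 2)
    push_cast at this
    rw [Nat.cast_sub (by omega)] at this
    push_cast at this
    linarith
  have hicast : (3 : ℚ) ≤ (i : ℚ) := by exact_mod_cast h3
  have : (((i - 2) / 2 : ℕ) : ℚ) * (2 * ((i : ℚ) - 3)) ≤ ((i : ℚ) - 1) * ((i : ℚ) - 2) := by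
    nlinarith [hmcast, hicast, Nat.cast_nonneg (α := ℚ) ((i - 2) / 2)]
  calc (((i - 2) / 2 : ℕ) : ℚ) * (2 * ((i : ℚ) - 3) * C)
      = ((((i - 2) / 2 : ℕ) : ℚ) * (2 * ((i : ℚ) - 3))) * C := by ring
    _ ≤ (((i : ℚ) - 1) * ((i : ℚ) - 2)) * C := mul_le_mul_of_nonneg_right this hC0
    _ = ((i : ℚ) - 1) * ((i : ℚ) - 2) * (Nat.factorial (2 * k - 2)) /
        ((Nat.factorial k) * (Nat.factorial (k - 1))) := by rw [hCdef]; ring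
end

section
/- Let k ≥ 4 be an integer and let i be an integer with 4 ≤ i ≤ k. Then c_i ≥ 0, where c_i = (i−2)·(2k−2)!/(k!·(k−1)!) − Σ_{l=1}^{⌊(i−2)/2⌋} (2l)!·(2k−2−2l)!/((l+1)!·l!·(k−l)!·(k−l+1)!) is a rational number. -/
open Finset
open Nat

/-- `c_i = (i−2)·(2k−2)!/(k!·(k−1)!) − Σ_{l=1}^{⌊(i−2)/2⌋} (2l)!·(2k−2−2l)!/((l+1)!·l!·(k−l)!·(k−l+1)!)`. -/
def cEH (k i : ℕ) : ℚ :=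
  ((i : ℚ) - 2) * (Nat.factorial (2 * k - 2)) /
      ((Nat.factorial k) * (Nat.factorial (k - 1)))
    - ∑ l ∈ Finset.Icc 1 ((i - 2) / 2),
        (Nat.factorial (2 * l)) * (Nat.factorial (2 * k - 2 - 2 * l)) /
          ((Nat.factorial (l + 1)) * (Nat.factorial l) * (Nat.factorial (k - l)) *
            (Nat.factorial (k - l + 1)))

lemma vdm_sq (l s : ℕ) :
    (l + s).choose l * (l + s).choose l ≤ (2 * (l + s)).choose (2 * l) := by
  have h : (2 * (l+s)).choose (2*l)
      = ∑ ij ∈ antidiagonal (2*l), (l+s).choose ij.1 * (l+s).choose ij.2 := by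
    rw [two_mul (l+s), Nat.add_choose_eq]
  rw [h]
  have hmem : ((l, l) : ℕ × ℕ) ∈ antidiagonal (2*l) := by
    simp [two_mul]
  exact Finset.single_le_sum (f := fun ij => (l+s).choose ij.1 * (l+s).choose ij.2)
    (fun ij _ => Nat.zero_le _) hmem

lemma keyfac (l s : ℕ) :
    (2*l)! * (2*s)! * ((l+s+1)! * (l+s)!)
      ≤ (2*(l+s))! * ((l+1)! * l ! * ((s+1))! * ((s+2))!) := by
  set c := (l + s).choose l with hc
  have h3 : c * l ! * s ! = (l+s)! := by
    have := Nat.choose_mul_factorial_mul_factorial (Nat.le_add_right l s)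
    simpa [hc] using this
  have h2 : (2*(l+s))! = (2*(l+s)).choose (2*l) * (2*l)! * (2*s)! := by
    have h2l : 2*l ≤ 2*(l+s) := by omega
    have := Nat.choose_mul_factorial_mul_factorial h2l
    have hsub : 2*(l+s) - 2*l = 2*s := by omega
    rw [hsub] at this
    omega
  have hfac : (l+s+1)! * (l+s)! ≤ c * c * ((l+1)! * l ! * (s+1)! * (s+2)!) := by
    have e1 : (l+s+1)! = (l+s+1) * (l+s)! := Nat.factorial_succ _
    have e2 : (l+1)! = (l+1) * l ! := Nat.factorial_succ _
    have e3 : (s+1)! = (s+1) * s ! := Nat.factorial_succ _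
    have e4 : (s+2)! = (s+2) * ((s+1) * s !) := by rw [Nat.factorial_succ, e3]
    rw [e1, e2, e3, e4, ← h3]
    have h1 : (l+s+1) ≤ (l+1) * (s+1) := by nlinarith
    have hmain : (l+s+1) ≤ (l+1) * ((s+1) * ((s+2) * (s+1))) := by
      have h2 : (1:ℕ) ≤ (s+2) * (s+1) := Nat.one_le_iff_ne_zero.mpr (by positivity)
      calc (l+s+1) ≤ (l+1) * (s+1) := h1
        _ = (l+1) * (s+1) * 1 := by ring
        _ ≤ (l+1) * (s+1) * ((s+2) * (s+1)) := Nat.mul_le_mul_left _ h2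
        _ = (l+1) * ((s+1) * ((s+2) * (s+1))) := by ring
    calc (l+s+1) * (c * l ! * s !) * (c * l ! * s !)
        ≤ ((l+1) * ((s+1) * ((s+2) * (s+1)))) * (c * l ! * s !) * (c * l ! * s !) :=
          Nat.mul_le_mul_right _ (Nat.mul_le_mul_right _ hmain)
      _ = c * c * ((l+1) * l ! * l ! * ((s+1) * s !) * ((s+2) * ((s+1) * s !))) := by ring
  calc (2*l)! * (2*s)! * ((l+s+1)! * (l+s)!)
      ≤ (2*l)! * (2*s)! * (c * c * ((l+1)! * l ! * (s+1)! * (s+2)!)) :=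
        Nat.mul_le_mul_left _ hfac
    _ = (c * c * (2*l)! * (2*s)!) * ((l+1)! * l ! * (s+1)! * (s+2)!) := by ring
    _ ≤ ((2*(l+s)).choose (2*l) * (2*l)! * (2*s)!) * ((l+1)! * l ! * (s+1)! * (s+2)!) := by
        have := vdm_sq l s
        exact Nat.mul_le_mul_right _ (Nat.mul_le_mul_right _ (Nat.mul_le_mul_right _ this))
    _ = (2*(l+s))! * ((l+1)! * l ! * (s+1)! * (s+2)!) := by rw [← h2]

theorem stmt_7 (k : ℕ) (hk : 4 ≤ k) (i : ℕ) (h4 : 4 ≤ i) (hi : i ≤ k) :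
    0 ≤ cEH k i := by
  have hterm : ∀ l ∈ Finset.Icc 1 ((i - 2) / 2),
      (((Nat.factorial (2 * l)) * (Nat.factorial (2 * k - 2 - 2 * l)) /
          ((Nat.factorial (l + 1)) * (Nat.factorial l) * (Nat.factorial (k - l)) *
            (Nat.factorial (k - l + 1))) : ℕ) : ℚ)
        ≤ (Nat.factorial (2 * k - 2) : ℚ) / ((Nat.factorial k) * (Nat.factorial (k - 1))) := by
    intro l hl
    simp only [Finset.mem_Icc] at hl
    have hlk : l ≤ k - 1 := by omega
    set s := k - 1 - l with hs
    have e1 : 2 * k - 2 = 2 * (l + s) := by omega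
    have e2 : 2 * k - 2 - 2 * l = 2 * s := by omega
    have e3 : k - l = s + 1 := by omega
    have e4 : k - l + 1 = s + 2 := by omega
    have e5 : k = l + s + 1 := by omega
    have e6 : k - 1 = l + s := by omega
    refine le_trans (Nat.cast_div_le) ?_
    push_cast
    rw [div_le_div_iff₀ (by positivity) (by positivity)]
    rw [e2, e1, e4, e3, e6]
    nth_rewrite 1 [e5]
    exact_mod_cast keyfac l s
  have hsum := Finset.sum_le_card_nsmul (Finset.Icc 1 ((i - 2) / 2)) _ _ hterm
  rw [Nat.card_Icc, nsmul_eq_mul] at hsum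
  simp only [Nat.add_sub_cancel] at hsum
  unfold cEH
  rw [sub_nonneg, mul_div_assoc, Nat.cast_sum]
  refine hsum.trans ?_
  apply mul_le_mul_of_nonneg_right _ (by positivity)
  have hmle : ((i - 2) / 2 : ℕ) ≤ i - 2 := Nat.div_le_self _ _
  have h2 := (Nat.cast_le (α := ℚ)).2 hmle
  rwa [Nat.cast_sub (by omega : 2 ≤ i)] at h2
end

section
/- Let k ≥ 6 be an integer and let h be an integer with 2 ≤ h ≤ ⌊(k−2)/2⌋. Then v_h ≤ max(v_2, v_{⌊(k−2)/2⌋}), where v_j = (2j)!·(2k−2−2j)!/((j+1)!·j!·(k−j)!·(k−j+1)!) as rational numbers. -/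
/-- `v_j = (2j)!·(2k−2−2j)!/((j+1)!·j!·(k−j)!·(k−j+1)!)`. -/
def vEH (k j : ℕ) : ℚ :=
  (Nat.factorial (2 * j)) * (Nat.factorial (2 * k - 2 - 2 * j)) /
    ((Nat.factorial (j + 1)) * (Nat.factorial j) * (Nat.factorial (k - j)) *
      (Nat.factorial (k - j + 1)))

private def Nk (k h : ℤ) : ℤ := -3*k^2 + 13*k*h - 2*k - 10*h^2 + 6*h - 2

private lemma vEH_nonneg (k j : ℕ) : 0 ≤ vEH k j := by
  unfold vEH; positivity

private lemma vEH_eq (j t : ℕ) :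
    vEH (2*j+4+t) (j+1) =
      ((Nat.factorial (2*j+2)) * (Nat.factorial (2*j+4+2*t)) : ℚ) /
        ((Nat.factorial (j+2)) * (Nat.factorial (j+1)) * (Nat.factorial (j+3+t)) *
          (Nat.factorial (j+4+t))) := by
  unfold vEH
  rw [show 2*(j+1) = 2*j+2 by ring]
  rw [show 2*(2*j+4+t) - 2 - (2*j+2) = 2*j+4+2*t by omega,
      show j+1+1 = j+2 by omega,
      show 2*j+4+t - (j+1) = j+3+t by omega,
      show j+3+t+1 = j+4+t by omega]

private lemma vEH_eq' (j t : ℕ) :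
    vEH (2*j+4+t) j =
      ((Nat.factorial (2*j)) * (Nat.factorial (2*j+6+2*t)) : ℚ) /
        ((Nat.factorial (j+1)) * (Nat.factorial j) * (Nat.factorial (j+4+t)) *
          (Nat.factorial (j+5+t))) := by
  unfold vEH
  rw [show 2*(2*j+4+t) - 2 - 2*j = 2*j+6+2*t by omega,
      show (2*j+4+t) - j = j+4+t by omega,
      show (j+4+t)+1 = j+5+t by ring]

private lemma key_eq (j t : ℕ) :
    vEH (2*j+4+t) (j+1) * (((2*j+6+2*t)*(2*j+5+2*t)*((j+2)*(j+1)) : ℕ) : ℚ)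
      = vEH (2*j+4+t) j * (((2*j+2)*(2*j+1)*((j+5+t)*(j+4+t)) : ℕ) : ℚ) := by
  rw [vEH_eq, vEH_eq']
  have e1 : Nat.factorial (2*j+2) = (2*j+2)*((2*j+1)*Nat.factorial (2*j)) := by
    rw [show 2*j+2 = (2*j+1)+1 by ring, Nat.factorial_succ, Nat.factorial_succ]
  have e2 : Nat.factorial (2*j+6+2*t) = (2*j+6+2*t)*((2*j+5+2*t)*Nat.factorial (2*j+4+2*t)) := by
    rw [show 2*j+6+2*t = (2*j+5+2*t)+1 by ring, Nat.factorial_succ,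
        show 2*j+5+2*t = (2*j+4+2*t)+1 by ring, Nat.factorial_succ]
  have e3 : Nat.factorial (j+2) = (j+2)*Nat.factorial (j+1) := by
    rw [show j+2 = (j+1)+1 by ring, Nat.factorial_succ]
  have e4 : Nat.factorial (j+1) = (j+1)*Nat.factorial j := Nat.factorial_succ j
  have e5 : Nat.factorial (j+5+t) = (j+5+t)*Nat.factorial (j+4+t) := by
    rw [show j+5+t = (j+4+t)+1 by ring, Nat.factorial_succ]
  have e6 : Nat.factorial (j+4+t) = (j+4+t)*Nat.factorial (j+3+t) := by
    rw [show j+4+t = (j+3+t)+1 by ring, Nat.factorial_succ]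
  have h1 : ((Nat.factorial (j+2) : ℚ)) ≠ 0 := by positivity
  have h2 : ((Nat.factorial (j+1) : ℚ)) ≠ 0 := by positivity
  have h3 : ((Nat.factorial (j+3+t) : ℚ)) ≠ 0 := by positivity
  have h4 : ((Nat.factorial (j+4+t) : ℚ)) ≠ 0 := by positivity
  have h5 : ((Nat.factorial j : ℚ)) ≠ 0 := by positivity
  have h6 : ((Nat.factorial (j+5+t) : ℚ)) ≠ 0 := by positivity
  field_simp
  rw [e1, e2, e3, e5]
  rw [e4, e6]
  push_cast
  ring

private lemma prod_le (j t : ℕ) (hN : Nk (2*j+4+t) (j+1) ≤ 0) :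
    (((2*j+2)*(2*j+1)*((j+5+t)*(j+4+t)) : ℕ) : ℚ)
      ≤ (((2*j+6+2*t)*(2*j+5+2*t)*((j+2)*(j+1)) : ℕ) : ℚ) := by
  have h : ((2*j+2)*(2*j+1)*((j+5+t)*(j+4+t)) : ℤ)
      ≤ ((2*j+6+2*t)*(2*j+5+2*t)*((j+2)*(j+1)) : ℤ) := by
    have hj : (0:ℤ) ≤ 2*(j:ℤ)+2 := by positivity
    have := mul_nonpos_of_nonneg_of_nonpos hj hN
    simp only [Nk] at this
    nlinarith [this]
  exact_mod_cast h

private lemma prod_ge (j t : ℕ) (hN : 0 ≤ Nk (2*j+4+t) (j+1)) :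
    (((2*j+6+2*t)*(2*j+5+2*t)*((j+2)*(j+1)) : ℕ) : ℚ)
      ≤ (((2*j+2)*(2*j+1)*((j+5+t)*(j+4+t)) : ℕ) : ℚ) := by
  have h : ((2*j+6+2*t)*(2*j+5+2*t)*((j+2)*(j+1)) : ℤ)
      ≤ ((2*j+2)*(2*j+1)*((j+5+t)*(j+4+t)) : ℤ) := by
    have hj : (0:ℤ) ≤ 2*(j:ℤ)+2 := by positivity
    have := mul_nonneg hj hN
    simp only [Nk] at this
    nlinarith [this]
  exact_mod_cast h

private lemma step_down (j t : ℕ) (hN : Nk (2*j+4+t) (j+1) ≤ 0) :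
    vEH (2*j+4+t) (j+1) ≤ vEH (2*j+4+t) j := by
  set P : ℚ := (((2*j+6+2*t)*(2*j+5+2*t)*((j+2)*(j+1)) : ℕ) : ℚ) with hP
  set Q : ℚ := (((2*j+2)*(2*j+1)*((j+5+t)*(j+4+t)) : ℕ) : ℚ) with hQ
  have hPpos : 0 < P := by rw [hP]; positivity
  have hQP : Q ≤ P := prod_le j t hN
  have key := key_eq j t
  have h1 : vEH (2*j+4+t) (j+1) * P ≤ vEH (2*j+4+t) j * P := by
    rw [key]
    exact mul_le_mul_of_nonneg_left hQP (vEH_nonneg _ _)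
  exact le_of_mul_le_mul_right h1 hPpos

private lemma step_up (j t : ℕ) (hN : 0 ≤ Nk (2*j+4+t) (j+1)) :
    vEH (2*j+4+t) j ≤ vEH (2*j+4+t) (j+1) := by
  set P : ℚ := (((2*j+6+2*t)*(2*j+5+2*t)*((j+2)*(j+1)) : ℕ) : ℚ) with hP
  set Q : ℚ := (((2*j+2)*(2*j+1)*((j+5+t)*(j+4+t)) : ℕ) : ℚ) with hQ
  have hPpos : 0 < P := by rw [hP]; positivity
  have hQP : P ≤ Q := prod_ge j t hN
  have key := key_eq j t
  have h1 : vEH (2*j+4+t) j * P ≤ vEH (2*j+4+t) (j+1) * P := by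
    calc vEH (2*j+4+t) j * P ≤ vEH (2*j+4+t) j * Q :=
          mul_le_mul_of_nonneg_left hQP (vEH_nonneg _ _)
      _ = vEH (2*j+4+t) (j+1) * P := key.symm
  exact le_of_mul_le_mul_right h1 hPpos

private lemma down (k : ℕ) : ∀ h : ℕ, 2 ≤ h → 2*h+2 ≤ k → Nk k h ≤ 0 →
    vEH k h ≤ vEH k 2 := by
  intro h
  induction h using Nat.strong_induction_on with
  | _ h ih =>
    intro h2 hk hN
    rcases eq_or_lt_of_le h2 with he | hlt
    · rw [← he]
    · -- h ≥ 3
      obtain ⟨j, rfl⟩ : ∃ j, h = j+1 := ⟨h-1, by omega⟩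
      obtain ⟨t, rfl⟩ : ∃ t, k = 2*j+4+t := ⟨k - (2*j+4), by omega⟩
      have hN2 : Nk (2*(j:ℤ)+4+(t:ℤ)) ((j:ℤ)+1) ≤ 0 := by push_cast at hN ⊢; exact_mod_cast hN
      have hstep : vEH (2*j+4+t) (j+1) ≤ vEH (2*j+4+t) j := step_down j t hN2
      have hN' : Nk ((2*j+4+t : ℕ) : ℤ) ((j : ℕ) : ℤ) ≤ 0 := by
        simp only [Nk] at hN2 ⊢
        push_cast
        nlinarith [hN2]
      calc vEH (2*j+4+t) (j+1) ≤ vEH (2*j+4+t) j := hstep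
        _ ≤ vEH (2*j+4+t) 2 := ih j (by omega) (by omega) (by omega) hN'

private lemma up (k : ℕ) : ∀ d h : ℕ, 2*(h+d)+2 ≤ k → 0 ≤ Nk k h →
    vEH k h ≤ vEH k (h+d) := by
  intro d
  induction d with
  | zero => intro h _ _; simp
  | succ d ih =>
    intro h hk hN
    obtain ⟨t, rfl⟩ : ∃ t, k = 2*h+4+t := ⟨k - (2*h+4), by omega⟩
    have hN' : 0 ≤ Nk ((2*h+4+t : ℕ) : ℤ) ((h+1 : ℕ) : ℤ) := by
      simp only [Nk] at hN ⊢
      have hk' : (2*((h:ℤ)+(d:ℤ)+1)+2 : ℤ) ≤ ((2*h+4+t : ℕ) : ℤ) := by exact_mod_cast hk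
      push_cast at hN hk' ⊢
      nlinarith [hN, hk']
    have hN2 : 0 ≤ Nk (2*(h:ℤ)+4+(t:ℤ)) ((h:ℤ)+1) := by push_cast at hN' ⊢; exact_mod_cast hN'
    have hstep : vEH (2*h+4+t) h ≤ vEH (2*h+4+t) (h+1) := step_up h t hN2
    calc vEH (2*h+4+t) h ≤ vEH (2*h+4+t) (h+1) := hstep
      _ ≤ vEH (2*h+4+t) (h+1+d) := ih (h+1) (by omega) hN'
      _ = vEH (2*h+4+t) (h+(d+1)) := by rw [show h+1+d = h+(d+1) by omega]

theorem stmt_9 (k : ℕ) (hk : 6 ≤ k) (h : ℕ) (h2 : 2 ≤ h) (hh : h ≤ (k - 2) / 2) :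
    vEH k h ≤ max (vEH k 2) (vEH k ((k - 2) / 2)) := by
  set M := (k-2)/2 with hM
  have hk2 : 2*h+2 ≤ k := by omega
  have hkM : 2*M+2 ≤ k := by omega
  rcases le_or_gt (Nk k h) 0 with hN | hN
  · exact le_max_of_le_left (down k h h2 hk2 hN)
  · have := up k (M-h) h (by omega) (le_of_lt hN)
    rw [show h + (M-h) = M by omega] at this
    exact le_max_of_le_right this
end

section
/- For every integer h ≥ 2 one has (4h+2)!/((2h+2)!·(2h+1)!) ≥ (2h)!·(2h+2)!/((h+1)!·h!·(h+2)!·(h+3)!), as rational numbers; equivalently a_h := (4h+2)!·h!·(h+1)!·(h+2)!·(h+3)!/(((2h+2)!)²·(2h+1)!·(2h)!) ≥ 1. -/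
open Nat

lemma key_fact (h : ℕ) (h2 : 2 ≤ h) :
    ((2*h+2)!)^2 * (2*h+1)! * (2*h)! ≤ (4*h+2)! * ((h)! * (h+1)! * (h+2)! * (h+3)!) := by
  induction h, h2 using Nat.le_induction with
  | base => norm_num [Nat.factorial]
  | succ h hh ih =>
    have e1 : 4*(h+1)+2 = (4*h+2) + 4 := by ring
    have e2 : 2*(h+1)+2 = (2*h+2) + 2 := by ring
    have e3 : 2*(h+1)+1 = (2*h+1) + 2 := by ring
    have e4 : 2*(h+1) = (2*h) + 2 := by ring
    rw [e1, e2, e3, e4]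
    have f1 : ((4*h+2)+4)! = (4*h+6)*(4*h+5)*(4*h+4)*(4*h+3) * (4*h+2)! := by
      simp [Nat.factorial_succ]; ring
    have f2 : ((2*h+2)+2)! = (2*h+4)*(2*h+3) * (2*h+2)! := by
      simp [Nat.factorial_succ]; ring
    have f3 : ((2*h+1)+2)! = (2*h+3)*(2*h+2) * (2*h+1)! := by
      simp [Nat.factorial_succ]; ring
    have f4 : ((2*h)+2)! = (2*h+2)*(2*h+1) * (2*h)! := by
      simp [Nat.factorial_succ]; ring
    have g1 : (h+1+1)! = (h+2)*(h+1)! := by simp [Nat.factorial_succ]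
    have g2 : (h+1+2)! = (h+3)*(h+2)! := by
      show (h+3)! = _
      simp [show h+3 = (h+2)+1 from rfl, Nat.factorial_succ]
    have g3 : (h+1+3)! = (h+4)*(h+3)! := by
      show (h+4)! = _
      simp [show h+4 = (h+3)+1 from rfl, Nat.factorial_succ]
    rw [f4, f1, f2, f3, g1, g2, g3]
    have hN : (2*h+4)^2*(2*h+3)^2 * ((2*h+3)*(2*h+2)) * ((2*h+2)*(2*h+1))
        ≤ (4*h+6)*(4*h+5)*(4*h+4)*(4*h+3) * ((h+1)*((h+2)*((h+3)*(h+4)))) := by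
      have hid : (4*h+6)*(4*h+5)*(4*h+4)*(4*h+3) * ((h+1)*((h+2)*((h+3)*(h+4))))
          = (2*h+4)^2*(2*h+3)^2 * ((2*h+3)*(2*h+2)) * ((2*h+2)*(2*h+1))
            + (896*h^7 + 9072*h^6 + 38264*h^5 + 87288*h^4 + 116504*h^3
               + 91128*h^2 + 38736*h + 6912) := by ring
      rw [hid]
      exact Nat.le_add_right _ _
    calc ((2*h+4)*(2*h+3) * (2*h+2)!)^2 * ((2*h+3)*(2*h+2) * (2*h+1)!) * ((2*h+2)*(2*h+1) * (2*h)!)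
        = ((2*h+4)^2*(2*h+3)^2 * ((2*h+3)*(2*h+2)) * ((2*h+2)*(2*h+1)))
            * (((2*h+2)!)^2 * (2*h+1)! * (2*h)!) := by ring
      _ ≤ ((4*h+6)*(4*h+5)*(4*h+4)*(4*h+3) * ((h+1)*((h+2)*((h+3)*(h+4)))))
            * ((4*h+2)! * ((h)! * (h+1)! * (h+2)! * (h+3)!)) :=
          Nat.mul_le_mul hN ih
      _ = (4*h+6)*(4*h+5)*(4*h+4)*(4*h+3) * (4*h+2)!
            * ((h+1)! * ((h+2)*(h+1)!) * ((h+3)*(h+2)!) * ((h+4)*(h+3)!)) := by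
          rw [Nat.factorial_succ h]; ring

theorem stmt_12 (h : ℕ) (h2 : 2 ≤ h) :
    ((Nat.factorial (4 * h + 2)) : ℚ) / ((Nat.factorial (2 * h + 2)) * (Nat.factorial (2 * h + 1)))
        ≥ (Nat.factorial (2 * h)) * (Nat.factorial (2 * h + 2)) /
            ((Nat.factorial (h + 1)) * (Nat.factorial h) * (Nat.factorial (h + 2)) *
              (Nat.factorial (h + 3)))
      ∧ ((Nat.factorial (4 * h + 2)) : ℚ) * (Nat.factorial h) * (Nat.factorial (h + 1)) *
            (Nat.factorial (h + 2)) * (Nat.factorial (h + 3)) /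
          (((Nat.factorial (2 * h + 2)) : ℚ) ^ 2 * (Nat.factorial (2 * h + 1)) *
            (Nat.factorial (2 * h))) ≥ 1 := by
  have key := key_fact h h2
  have keyQ : (((2*h+2)! : ℚ))^2 * (2*h+1)! * (2*h)!
      ≤ (4*h+2)! * ((h)! * (h+1)! * (h+2)! * (h+3)!) := by exact_mod_cast key
  have p0 : ∀ n : ℕ, (0:ℚ) < (n ! : ℚ) := fun n => by exact_mod_cast n.factorial_pos
  constructor
  · rw [ge_iff_le, div_le_div_iff₀ (by positivity) (by positivity)]
    nlinarith [keyQ]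
  · rw [ge_iff_le, le_div_iff₀ (by positivity)]
    nlinarith [keyQ]
end
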